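/- Let H be a bialgebra over a field k and σ : H ⊗ H → k a normalized convolution-invertible 2-cocycle. Then the twisted product x ·_σ y := σ(x₍₁₎, y₍₁₎) x₍₂₎y₍₂₎ σ⁻¹(x₍₃₎, y₍₃₎) is associative with unit 1, and the original coproduct Δ and counit ε are algebra maps for this new product, so that H^σ := (H, ·_σ, 1, Δ, ε) is again a bialgebra. -/

import Mathlib

open TensorProduct LinearMap Coalgebra

attribute [-instance] TensorProduct.instCoalgebraStruct TensorProduct.instCoalgebra TensorProduct.instBialgebra

noncomputable section
namespace CT

variable {k : Type*} [CommRing k]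
variable {C : Type*} [AddCommGroup C] [Module k C]
variable {D : Type*} [AddCommGroup D] [Module k D]

section Nat
variable {M M' N N' P P' Q Q' : Type*}
  [AddCommGroup M] [Module k M] [AddCommGroup M'] [Module k M']
  [AddCommGroup N] [Module k N] [AddCommGroup N'] [Module k N']
  [AddCommGroup P] [Module k P] [AddCommGroup P'] [Module k P']
  [AddCommGroup Q] [Module k Q] [AddCommGroup Q'] [Module k Q']

/-- Naturality of `tensorTensorTensorComm`. -/
lemma ttc_natural (f : M →ₗ[k] M') (g : N →ₗ[k] N') (h : P →ₗ[k] P') (l : Q →ₗ[k] Q') :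
    (map (map f h) (map g l)) ∘ₗ (tensorTensorTensorComm k M N P Q).toLinearMap
      = (tensorTensorTensorComm k M' N' P' Q').toLinearMap ∘ₗ (map (map f g) (map h l)) := by
  ext
  simp

end Nat

section Prod
variable [Coalgebra k C] [Coalgebra k D]

/-- Comultiplication on a tensor product of coalgebras. -/
def pComul : C ⊗[k] D →ₗ[k] (C ⊗[k] D) ⊗[k] (C ⊗[k] D) :=
  (tensorTensorTensorComm k C C D D).toLinearMap ∘ₗ map comul comul

/-- Counit on a tensor product of coalgebras. -/
def pCounit : C ⊗[k] D →ₗ[k] k := LinearMap.mul' k k ∘ₗ map counit counit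

lemma pComul_tmul (c : C) (d : D) :
    pComul (k := k) (c ⊗ₜ d) =
      (tensorTensorTensorComm k C C D D) (Coalgebra.comul c ⊗ₜ Coalgebra.comul d) := by
  simp [pComul]

lemma pCounit_tmul (c : C) (d : D) :
    pCounit (k := k) (c ⊗ₜ d) = Coalgebra.counit (R := k) c * Coalgebra.counit (R := k) d := by
  simp [pCounit]

private lemma h_rT : (pComul (k := k) (C := C) (D := D)).rTensor (C ⊗[k] D) ∘ₗ
      (tensorTensorTensorComm k C C D D).toLinearMap
    = (map (tensorTensorTensorComm k C C D D).toLinearMap LinearMap.id) ∘ₗ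
        (tensorTensorTensorComm k (C ⊗[k] C) C (D ⊗[k] D) D).toLinearMap ∘ₗ
        map (comul.rTensor C) (comul.rTensor D) := by
  ext
  simp [pComul, rTensor]

private lemma h_lT : (pComul (k := k) (C := C) (D := D)).lTensor (C ⊗[k] D) ∘ₗ
      (tensorTensorTensorComm k C C D D).toLinearMap
    = (map LinearMap.id (tensorTensorTensorComm k C C D D).toLinearMap) ∘ₗ
        (tensorTensorTensorComm k C (C ⊗[k] C) D (D ⊗[k] D)).toLinearMap ∘ₗ
        map (comul.lTensor C) (comul.lTensor D) := by
  ext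
  simp [pComul, lTensor]

private lemma h_struct :
    (TensorProduct.assoc k (C ⊗[k] D) (C ⊗[k] D) (C ⊗[k] D)).toLinearMap ∘ₗ
      (map (tensorTensorTensorComm k C C D D).toLinearMap LinearMap.id) ∘ₗ
      (tensorTensorTensorComm k (C ⊗[k] C) C (D ⊗[k] D) D).toLinearMap ∘ₗ
      map (TensorProduct.assoc k C C C).symm.toLinearMap
        (TensorProduct.assoc k D D D).symm.toLinearMap
    = (map LinearMap.id (tensorTensorTensorComm k C C D D).toLinearMap) ∘ₗ
        (tensorTensorTensorComm k C (C ⊗[k] C) D (D ⊗[k] D)).toLinearMap := by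
  ext
  simp

private lemma h_rCounit : (pCounit (k := k) (C := C) (D := D)).rTensor (C ⊗[k] D) ∘ₗ
      (tensorTensorTensorComm k C C D D).toLinearMap
    = (map (LinearMap.mul' k k) LinearMap.id) ∘ₗ
        (tensorTensorTensorComm k k C k D).toLinearMap ∘ₗ
        map (counit.rTensor C) (counit.rTensor D) := by
  ext
  simp [pCounit, rTensor]

private lemma h_lCounit : (pCounit (k := k) (C := C) (D := D)).lTensor (C ⊗[k] D) ∘ₗ
      (tensorTensorTensorComm k C C D D).toLinearMap
    = (map LinearMap.id (LinearMap.mul' k k)) ∘ₗ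
        (tensorTensorTensorComm k C k D k).toLinearMap ∘ₗ
        map (counit.lTensor C) (counit.lTensor D) := by
  ext
  simp [pCounit, lTensor]

/-- The tensor product of two coalgebras is a coalgebra. -/
instance pCoalgebra : Coalgebra k (C ⊗[k] D) where
  comul := pComul
  counit := pCounit
  coassoc := by
    apply TensorProduct.ext'
    intro c d
    have e1 := LinearMap.congr_fun (h_rT (k := k) (C := C) (D := D))
      (Coalgebra.comul c ⊗ₜ Coalgebra.comul d)
    have e2 := LinearMap.congr_fun (h_lT (k := k) (C := C) (D := D))
      (Coalgebra.comul c ⊗ₜ Coalgebra.comul d)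
    have e3 := LinearMap.congr_fun (h_struct (k := k) (C := C) (D := D))
      ((comul.lTensor C (Coalgebra.comul c)) ⊗ₜ (comul.lTensor D (Coalgebra.comul d)))
    simp only [comp_apply, map_tmul, coe_comp, Function.comp_apply,
      LinearEquiv.coe_coe, id_coe, _root_.id] at e1 e2 e3
    simp only [comp_apply, LinearEquiv.coe_coe, pComul_tmul]
    rw [e1]
    rw [show comul.rTensor C (Coalgebra.comul c)
        = (TensorProduct.assoc k C C C).symm (comul.lTensor C (Coalgebra.comul c)) from
      (coassoc_symm_apply c).symm]
    rw [show comul.rTensor D (Coalgebra.comul d)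
        = (TensorProduct.assoc k D D D).symm (comul.lTensor D (Coalgebra.comul d)) from
      (coassoc_symm_apply d).symm]
    exact e3.trans e2.symm
  rTensor_counit_comp_comul := by
    apply TensorProduct.ext'
    intro c d
    have e1 := LinearMap.congr_fun (h_rCounit (k := k) (C := C) (D := D))
      (Coalgebra.comul c ⊗ₜ Coalgebra.comul d)
    simp only [comp_apply, map_tmul, LinearEquiv.coe_coe] at e1
    simp only [comp_apply, pComul_tmul, LinearEquiv.coe_coe, e1, rTensor_counit_comul]
    simp
  lTensor_counit_comp_comul := by
    apply TensorProduct.ext'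
    intro c d
    have e1 := LinearMap.congr_fun (h_lCounit (k := k) (C := C) (D := D))
      (Coalgebra.comul c ⊗ₜ Coalgebra.comul d)
    simp only [comp_apply, map_tmul, LinearEquiv.coe_coe] at e1
    simp only [comp_apply, pComul_tmul, LinearEquiv.coe_coe, e1, lTensor_counit_comul]
    simp

lemma comul_tmul (c : C) (d : D) :
    Coalgebra.comul (R := k) (c ⊗ₜ d) =
      (tensorTensorTensorComm k C C D D) (Coalgebra.comul c ⊗ₜ Coalgebra.comul d) :=
  pComul_tmul c d

lemma counit_tmul (c : C) (d : D) :
    Coalgebra.counit (R := k) (c ⊗ₜ[k] d) =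
      Coalgebra.counit (R := k) c * Coalgebra.counit (R := k) d :=
  pCounit_tmul c d

/-- Counit is multiplicative along comul. -/
lemma counit_conv_counit :
    LinearMap.mul' k k ∘ₗ map Coalgebra.counit Coalgebra.counit ∘ₗ (Coalgebra.comul (R := k) (A := C))
      = Coalgebra.counit := by
  have e1 : LinearMap.mul' k k ∘ₗ map (Coalgebra.counit (R := k) (A := C)) Coalgebra.counit
      = Coalgebra.counit ∘ₗ (TensorProduct.lid k C).toLinearMap ∘ₗ
          (Coalgebra.counit (R := k) (A := C)).rTensor C := by
    ext; simp [rTensor, smul_eq_mul]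
  apply LinearMap.ext; intro c
  have e2 := LinearMap.congr_fun e1 (Coalgebra.comul c)
  simp only [comp_apply] at e2 ⊢
  rw [e2, rTensor_counit_comul]
  simp

end Prod

section Conv
variable [Coalgebra k C]
variable {C' : Type*} [AddCommGroup C'] [Module k C'] [Coalgebra k C']
variable {A : Type*} [Ring A] [Algebra k A]
variable {B : Type*} [Ring B] [Algebra k B]
variable {M N : Type*} [AddCommGroup M] [Module k M] [AddCommGroup N] [Module k N]

/-- Convolution product. -/
def conv (f g : C →ₗ[k] A) : C →ₗ[k] A := mul' k A ∘ₗ map f g ∘ₗ Coalgebra.comul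

/-- Convolution unit. -/
def convOne : C →ₗ[k] A := Algebra.linearMap k A ∘ₗ Coalgebra.counit

lemma conv_apply (f g : C →ₗ[k] A) (c : C) :
    conv f g c = mul' k A (map f g (Coalgebra.comul c)) := rfl

lemma conv_assoc (f g h : C →ₗ[k] A) : conv (conv f g) h = conv f (conv g h) := by
  have e1 : map (conv f g) h
      = (mul' k A).rTensor A ∘ₗ map (map f g) h ∘ₗ (Coalgebra.comul (A := C)).rTensor C := by
    ext; simp [conv, rTensor]
  have e2 : map f (conv g h)
      = (mul' k A).lTensor A ∘ₗ map f (map g h) ∘ₗ (Coalgebra.comul (A := C)).lTensor C := by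
    ext; simp [conv, lTensor]
  have e3 : mul' k A ∘ₗ (mul' k A).rTensor A ∘ₗ map (map f g) h
        ∘ₗ (TensorProduct.assoc k C C C).symm.toLinearMap
      = mul' k A ∘ₗ (mul' k A).lTensor A ∘ₗ map f (map g h) := by
    ext; simp [mul_assoc, rTensor, lTensor]
  apply LinearMap.ext; intro c
  simp only [conv_apply]
  rw [LinearMap.congr_fun e1 (Coalgebra.comul c), LinearMap.congr_fun e2 (Coalgebra.comul c)]
  simp only [comp_apply]
  rw [show (Coalgebra.comul (A := C)).rTensor C (Coalgebra.comul c)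
      = (TensorProduct.assoc k C C C).symm ((Coalgebra.comul (A := C)).lTensor C
        (Coalgebra.comul c)) from (coassoc_symm_apply c).symm]
  have e4 := LinearMap.congr_fun e3 ((Coalgebra.comul (A := C)).lTensor C (Coalgebra.comul c))
  simp only [comp_apply, LinearEquiv.coe_coe] at e4
  exact e4

lemma one_conv (f : C →ₗ[k] A) : conv convOne f = f := by
  have e1 : mul' k A ∘ₗ map (Algebra.linearMap k A ∘ₗ Coalgebra.counit) f
      = f ∘ₗ (TensorProduct.lid k C).toLinearMap ∘ₗ (Coalgebra.counit (A := C)).rTensor C := by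
    ext; simp [Algebra.smul_def, rTensor]
  apply LinearMap.ext; intro c
  simp only [conv, convOne, comp_apply]
  have e2 := LinearMap.congr_fun e1 (Coalgebra.comul c)
  simp only [comp_apply] at e2
  rw [e2]
  simp

lemma conv_one (f : C →ₗ[k] A) : conv f convOne = f := by
  have e1 : mul' k A ∘ₗ map f (Algebra.linearMap k A ∘ₗ Coalgebra.counit)
      = f ∘ₗ (TensorProduct.rid k C).toLinearMap ∘ₗ (Coalgebra.counit (A := C)).lTensor C := by
    ext; simp [Algebra.smul_def, lTensor, Algebra.commutes]
  apply LinearMap.ext; intro c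
  simp only [conv, convOne, comp_apply]
  have e2 := LinearMap.congr_fun e1 (Coalgebra.comul c)
  simp only [comp_apply] at e2
  rw [e2]
  simp

/-- A linear map is a coalgebra morphism (unbundled predicate). -/
def IsCoalgMap (γ : C' →ₗ[k] C) : Prop :=
  Coalgebra.comul ∘ₗ γ = map γ γ ∘ₗ Coalgebra.comul ∧
    Coalgebra.counit ∘ₗ γ = Coalgebra.counit

lemma conv_precomp (f g : C →ₗ[k] A) {γ : C' →ₗ[k] C} (hγ : IsCoalgMap γ) :
    conv f g ∘ₗ γ = conv (f ∘ₗ γ) (g ∘ₗ γ) := by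
  apply LinearMap.ext; intro c
  simp only [conv, comp_apply]
  rw [← comp_apply (Coalgebra.comul) γ, hγ.1]
  simp only [comp_apply]
  rw [← comp_apply (map f g) (map γ γ), ← map_comp]

lemma one_precomp {γ : C' →ₗ[k] C} (hγ : IsCoalgMap γ) :
    (convOne (k := k) (C := C) (A := A)) ∘ₗ γ = convOne := by
  unfold convOne
  rw [comp_assoc, hγ.2]

lemma comp_conv (θ : A →ₐ[k] B) (f g : C →ₗ[k] A) :
    θ.toLinearMap ∘ₗ conv f g = conv (θ.toLinearMap ∘ₗ f) (θ.toLinearMap ∘ₗ g) := by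
  have e1 : θ.toLinearMap ∘ₗ mul' k A = mul' k B ∘ₗ map θ.toLinearMap θ.toLinearMap := by
    ext; simp
  apply LinearMap.ext; intro c
  simp only [conv, comp_apply]
  rw [← comp_apply θ.toLinearMap (mul' k A), e1]
  simp only [comp_apply]
  rw [← comp_apply (map _ _) (map f g), ← map_comp]

lemma comp_one (θ : A →ₐ[k] B) :
    θ.toLinearMap ∘ₗ (convOne (k := k) (C := C) (A := A)) = convOne := by
  apply LinearMap.ext; intro c
  simp [convOne, Algebra.algebraMap_eq_smul_one, map_smul]

end Conv

section ProdConv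
variable [Coalgebra k C] [Coalgebra k D]
variable {A : Type*} [Ring A] [Algebra k A]

/-- First projection `c ⊗ d ↦ ε(d) • c`. -/
def pr1 : C ⊗[k] D →ₗ[k] C :=
  (TensorProduct.rid k C).toLinearMap ∘ₗ (Coalgebra.counit (R := k) (A := D)).lTensor C

/-- Second projection `c ⊗ d ↦ ε(c) • d`. -/
def pr2 : C ⊗[k] D →ₗ[k] D :=
  (TensorProduct.lid k D).toLinearMap ∘ₗ (Coalgebra.counit (R := k) (A := C)).rTensor D

lemma pr1_tmul (c : C) (d : D) : pr1 (k := k) (c ⊗ₜ d) = Coalgebra.counit (R := k) d • c := by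
  simp [pr1]

lemma pr2_tmul (c : C) (d : D) : pr2 (k := k) (c ⊗ₜ d) = Coalgebra.counit (R := k) c • d := by
  simp [pr2]

/-- `(pr1 ⊗ pr2) ∘ Δ = id` on `C ⊗ D`. -/
lemma map_pr1_pr2_comul :
    map (pr1 (k := k) (C := C) (D := D)) pr2 ∘ₗ Coalgebra.comul = LinearMap.id := by
  have L : map (pr1 (k := k) (C := C) (D := D)) pr2 ∘ₗ
        (tensorTensorTensorComm k C C D D).toLinearMap
      = map (TensorProduct.rid k C).toLinearMap (TensorProduct.lid k D).toLinearMap ∘ₗ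
          (tensorTensorTensorComm k C k k D).toLinearMap ∘ₗ
          map ((Coalgebra.counit (R := k) (A := C)).lTensor C)
            ((Coalgebra.counit (R := k) (A := D)).rTensor D) := by
    ext; simp [pr1, pr2]
  apply TensorProduct.ext'
  intro c d
  simp only [comp_apply, comul_tmul, id_coe, _root_.id]
  have e := LinearMap.congr_fun L (Coalgebra.comul c ⊗ₜ Coalgebra.comul d)
  simp only [comp_apply, LinearEquiv.coe_coe] at e
  rw [e]
  simp only [comp_apply, map_tmul, lTensor_counit_comul, rTensor_counit_comul,
    LinearEquiv.coe_coe, tensorTensorTensorComm_tmul]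
  simp

/-- `(pr2 ⊗ pr1) ∘ Δ = comm` on `C ⊗ D`. -/
lemma map_pr2_pr1_comul :
    map (pr2 (k := k) (C := C) (D := D)) pr1 ∘ₗ Coalgebra.comul
      = (TensorProduct.comm k C D).toLinearMap := by
  have L : map (pr2 (k := k) (C := C) (D := D)) pr1 ∘ₗ
        (tensorTensorTensorComm k C C D D).toLinearMap
      = map (TensorProduct.lid k D).toLinearMap (TensorProduct.rid k C).toLinearMap ∘ₗ
          (tensorTensorTensorComm k k C D k).toLinearMap ∘ₗ
          map ((Coalgebra.counit (R := k) (A := C)).rTensor C)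
            ((Coalgebra.counit (R := k) (A := D)).lTensor D) := by
    ext; simp [pr1, pr2]
  apply TensorProduct.ext'
  intro c d
  simp only [comp_apply, comul_tmul, LinearEquiv.coe_coe]
  have e := LinearMap.congr_fun L (Coalgebra.comul c ⊗ₜ Coalgebra.comul d)
  simp only [comp_apply, LinearEquiv.coe_coe] at e
  rw [e]
  simp only [comp_apply, map_tmul, lTensor_counit_comul, rTensor_counit_comul,
    LinearEquiv.coe_coe, tensorTensorTensorComm_tmul]
  simp

/-- `mul' ∘ (u ⊗ v) = (u∘pr1) ⋆ (v∘pr2)`. -/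
lemma mul'_map_eq_conv (u : C →ₗ[k] A) (v : D →ₗ[k] A) :
    mul' k A ∘ₗ map u v = conv (u ∘ₗ pr1) (v ∘ₗ pr2) := by
  apply LinearMap.ext; intro w
  simp only [conv, comp_apply]
  rw [show map (u ∘ₗ pr1) (v ∘ₗ pr2) = map u v ∘ₗ map pr1 pr2 from (map_comp u v pr1 pr2)]
  simp only [comp_apply]
  rw [show map (pr1 (k := k) (C := C) (D := D)) pr2 (Coalgebra.comul w) = w from
    LinearMap.congr_fun map_pr1_pr2_comul w]

end ProdConv

section IncludeLR
variable [Coalgebra k C]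
variable {A : Type*} [Ring A] [Algebra k A] {B : Type*} [Ring B] [Algebra k B]

/-- `(inclLeft∘u) ⋆ (inclRight∘v) = (u ⊗ v) ∘ Δ`. -/
lemma conv_includeLR (u : C →ₗ[k] A) (v : C →ₗ[k] B) :
    conv ((Algebra.TensorProduct.includeLeft (R := k) (S := k)).toLinearMap ∘ₗ u)
        ((Algebra.TensorProduct.includeRight (R := k)).toLinearMap ∘ₗ v)
      = map u v ∘ₗ Coalgebra.comul := by
  have e1 : mul' k (A ⊗[k] B) ∘ₗ
      map ((Algebra.TensorProduct.includeLeft (R := k) (S := k)).toLinearMap ∘ₗ u)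
        ((Algebra.TensorProduct.includeRight (R := k)).toLinearMap ∘ₗ v) = map u v := by
    ext; simp
  apply LinearMap.ext; intro w
  simp only [conv, comp_apply]
  rw [← comp_apply (mul' k _) (map _ _), e1]

end IncludeLR

section ConvMore
variable [Coalgebra k C]
variable {C' : Type*} [AddCommGroup C'] [Module k C'] [Coalgebra k C']
variable {A : Type*} [Ring A] [Algebra k A]
variable {B : Type*} [Ring B] [Algebra k B]
variable {M N : Type*} [AddCommGroup M] [Module k M] [AddCommGroup N] [Module k N]

/-- Left action of a functional on a linear map. -/
def lact (f : C →ₗ[k] k) (F : C →ₗ[k] M) : C →ₗ[k] M :=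
  (TensorProduct.lid k M).toLinearMap ∘ₗ map f F ∘ₗ Coalgebra.comul

/-- Right action of a functional on a linear map. -/
def ract (F : C →ₗ[k] M) (f : C →ₗ[k] k) : C →ₗ[k] M :=
  (TensorProduct.rid k M).toLinearMap ∘ₗ map F f ∘ₗ Coalgebra.comul

/-- Embedding of a functional as an `A`-valued map. -/
def emb (f : C →ₗ[k] k) : C →ₗ[k] A := Algebra.linearMap k A ∘ₗ f

lemma ofId_toLinearMap : (Algebra.ofId k A).toLinearMap = Algebra.linearMap k A := by
  ext; simp [Algebra.ofId_apply]

lemma one_eq_counit : (convOne : C →ₗ[k] k) = Coalgebra.counit := by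
  apply LinearMap.ext; intro c
  simp [convOne]

lemma emb_conv (f g : C →ₗ[k] k) :
    (emb (conv f g) : C →ₗ[k] A) = conv (emb f) (emb g) := by
  have := comp_conv (C := C) (Algebra.ofId k A) f g
  rw [ofId_toLinearMap] at this
  exact this

lemma algHom_emb (θ : A →ₐ[k] B) (f : C →ₗ[k] k) :
    θ.toLinearMap ∘ₗ (emb f : C →ₗ[k] A) = emb f := by
  apply LinearMap.ext; intro c
  simp [emb, AlgHom.commutes]

lemma emb_precomp (f : C →ₗ[k] k) (γ : C' →ₗ[k] C) :
    (emb f : C →ₗ[k] A) ∘ₗ γ = emb (f ∘ₗ γ) := by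
  rw [emb, emb, comp_assoc]

lemma conv_emb_left (f : C →ₗ[k] k) (F : C →ₗ[k] A) : conv (emb f) F = lact f F := by
  have e1 : mul' k A ∘ₗ map (emb f : C →ₗ[k] A) F
      = (TensorProduct.lid k A).toLinearMap ∘ₗ map f F := by
    ext; simp [emb, Algebra.smul_def]
  apply LinearMap.ext; intro c
  simp only [conv, lact, comp_apply]
  exact LinearMap.congr_fun e1 (Coalgebra.comul c)

lemma conv_emb_right (F : C →ₗ[k] A) (f : C →ₗ[k] k) : conv F (emb f) = ract F f := by
  have e1 : mul' k A ∘ₗ map F (emb f : C →ₗ[k] A)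
      = (TensorProduct.rid k A).toLinearMap ∘ₗ map F f := by
    ext; simp [emb, Algebra.smul_def, Algebra.commutes]
  apply LinearMap.ext; intro c
  simp only [conv, ract, comp_apply]
  exact LinearMap.congr_fun e1 (Coalgebra.comul c)

lemma lact_conv (f g : C →ₗ[k] k) : lact f g = conv f g := by
  have : (TensorProduct.lid k k).toLinearMap = mul' k k := by
    ext; simp [smul_eq_mul]
  rw [lact, conv, this]

lemma ract_conv (g : C →ₗ[k] k) (f : C →ₗ[k] k) : ract g f = conv g f := by
  have : (TensorProduct.rid k k).toLinearMap = mul' k k := by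
    ext; simp [smul_eq_mul]
  rw [ract, conv, this]

lemma comp_lact (φ : M →ₗ[k] N) (f : C →ₗ[k] k) (F : C →ₗ[k] M) :
    φ ∘ₗ lact f F = lact f (φ ∘ₗ F) := by
  have e1 : φ ∘ₗ (TensorProduct.lid k M).toLinearMap ∘ₗ map f F
      = (TensorProduct.lid k N).toLinearMap ∘ₗ map f (φ ∘ₗ F) := by
    ext; simp
  apply LinearMap.ext; intro c
  simp only [lact, comp_apply]
  exact LinearMap.congr_fun e1 (Coalgebra.comul c)

lemma comp_ract (φ : M →ₗ[k] N) (F : C →ₗ[k] M) (f : C →ₗ[k] k) :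
    φ ∘ₗ ract F f = ract (φ ∘ₗ F) f := by
  have e1 : φ ∘ₗ (TensorProduct.rid k M).toLinearMap ∘ₗ map F f
      = (TensorProduct.rid k N).toLinearMap ∘ₗ map (φ ∘ₗ F) f := by
    ext; simp
  apply LinearMap.ext; intro c
  simp only [ract, comp_apply]
  exact LinearMap.congr_fun e1 (Coalgebra.comul c)

lemma emb_counit : (emb Coalgebra.counit : C →ₗ[k] A) = convOne := rfl

lemma conv_flatten (x y z u P v : C →ₗ[k] A) (h : conv z u = convOne) :
    conv (conv (conv x y) z) (conv (conv u P) v) = conv (conv (conv x y) P) v := by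
  rw [conv_assoc (conv x y) z (conv (conv u P) v)]
  have e : conv z (conv (conv u P) v) = conv P v := by
    rw [← conv_assoc z (conv u P) v, ← conv_assoc z u P, h, one_conv]
  rw [e, ← conv_assoc (conv x y) P v]

lemma icm_id : IsCoalgMap (LinearMap.id : C →ₗ[k] C) := by
  constructor
  · rw [map_id]; rfl
  · rfl

end ConvMore

section K12
variable [Coalgebra k C] [Coalgebra k D]

lemma K12a : map (pr1 (k := k) (C := C) (D := D)) LinearMap.id ∘ₗ Coalgebra.comul
    = (TensorProduct.assoc k C C D).toLinearMap ∘ₗ (Coalgebra.comul (R := k) (A := C)).rTensor D := by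
  have La : map (pr1 (k := k) (C := C) (D := D)) LinearMap.id ∘ₗ
        (tensorTensorTensorComm k C C D D).toLinearMap
      = (map (TensorProduct.rid k C).toLinearMap LinearMap.id ∘ₗ
          (tensorTensorTensorComm k C C k D).toLinearMap) ∘ₗ
          map LinearMap.id ((Coalgebra.counit (R := k) (A := D)).rTensor D) := by
    ext; simp [pr1]
  have Sa : (map (TensorProduct.rid k C).toLinearMap LinearMap.id ∘ₗ
        (tensorTensorTensorComm k C C k D).toLinearMap) ∘ₗ
          ((TensorProduct.mk k k D) 1).lTensor (C ⊗[k] C)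
      = (TensorProduct.assoc k C C D).toLinearMap := by
    ext; simp
  apply TensorProduct.ext'
  intro c d
  have e1 := LinearMap.congr_fun La (Coalgebra.comul c ⊗ₜ Coalgebra.comul d)
  simp only [comp_apply, LinearEquiv.coe_coe, map_tmul, id_coe, _root_.id,
    rTensor_counit_comul] at e1
  have e2 := LinearMap.congr_fun Sa (Coalgebra.comul c ⊗ₜ d)
  simp only [comp_apply, LinearEquiv.coe_coe, lTensor_tmul, TensorProduct.mk_apply] at e2
  simp only [comp_apply, comul_tmul, LinearEquiv.coe_coe, rTensor_tmul, id_coe, _root_.id]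
  rw [e1, e2]

lemma K12b : map LinearMap.id (pr1 (k := k) (C := C) (D := D)) ∘ₗ Coalgebra.comul
    = ((TensorProduct.assoc k C D C).symm.toLinearMap ∘ₗ
        ((TensorProduct.comm k C D).toLinearMap).lTensor C ∘ₗ
        (TensorProduct.assoc k C C D).toLinearMap) ∘ₗ
      (Coalgebra.comul (R := k) (A := C)).rTensor D := by
  have Lb : map LinearMap.id (pr1 (k := k) (C := C) (D := D)) ∘ₗ
        (tensorTensorTensorComm k C C D D).toLinearMap
      = (map LinearMap.id (TensorProduct.rid k C).toLinearMap ∘ₗ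
          (tensorTensorTensorComm k C C D k).toLinearMap) ∘ₗ
          map LinearMap.id ((Coalgebra.counit (R := k) (A := D)).lTensor D) := by
    ext; simp [pr1]
  have Sb : (map LinearMap.id (TensorProduct.rid k C).toLinearMap ∘ₗ
        (tensorTensorTensorComm k C C D k).toLinearMap) ∘ₗ
          (((TensorProduct.mk k D k).flip 1)).lTensor (C ⊗[k] C)
      = (TensorProduct.assoc k C D C).symm.toLinearMap ∘ₗ
          ((TensorProduct.comm k C D).toLinearMap).lTensor C ∘ₗ
          (TensorProduct.assoc k C C D).toLinearMap := by
    ext; simp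
  apply TensorProduct.ext'
  intro c d
  have e1 := LinearMap.congr_fun Lb (Coalgebra.comul c ⊗ₜ Coalgebra.comul d)
  simp only [comp_apply, LinearEquiv.coe_coe, map_tmul, id_coe, _root_.id,
    lTensor_counit_comul] at e1
  have e2 := LinearMap.congr_fun Sb (Coalgebra.comul c ⊗ₜ d)
  simp only [comp_apply, LinearEquiv.coe_coe, lTensor_tmul, flip_apply,
    TensorProduct.mk_apply] at e2
  simp only [comp_apply, comul_tmul, LinearEquiv.coe_coe, rTensor_tmul, id_coe, _root_.id]
  rw [e1, e2]

lemma K12c : map (pr2 (k := k) (C := C) (D := D)) LinearMap.id ∘ₗ Coalgebra.comul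
    = (TensorProduct.leftComm k C D D).toLinearMap ∘ₗ
        (Coalgebra.comul (R := k) (A := D)).lTensor C := by
  have Lc : map (pr2 (k := k) (C := C) (D := D)) LinearMap.id ∘ₗ
        (tensorTensorTensorComm k C C D D).toLinearMap
      = (map (TensorProduct.lid k D).toLinearMap LinearMap.id ∘ₗ
          (tensorTensorTensorComm k k C D D).toLinearMap) ∘ₗ
          map ((Coalgebra.counit (R := k) (A := C)).rTensor C) LinearMap.id := by
    ext; simp [pr2]
  have Sc : (map (TensorProduct.lid k D).toLinearMap LinearMap.id ∘ₗ
        (tensorTensorTensorComm k k C D D).toLinearMap) ∘ₗ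
          ((TensorProduct.mk k k C) 1).rTensor (D ⊗[k] D)
      = (TensorProduct.leftComm k C D D).toLinearMap := by
    ext; simp
  apply TensorProduct.ext'
  intro c d
  have e1 := LinearMap.congr_fun Lc (Coalgebra.comul c ⊗ₜ Coalgebra.comul d)
  simp only [comp_apply, LinearEquiv.coe_coe, map_tmul, id_coe, _root_.id,
    rTensor_counit_comul] at e1
  have e2 := LinearMap.congr_fun Sc (c ⊗ₜ Coalgebra.comul d)
  simp only [comp_apply, LinearEquiv.coe_coe, rTensor_tmul, TensorProduct.mk_apply] at e2
  simp only [comp_apply, comul_tmul, LinearEquiv.coe_coe, lTensor_tmul, id_coe, _root_.id]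
  rw [e1, e2]

lemma K12d : map LinearMap.id (pr2 (k := k) (C := C) (D := D)) ∘ₗ Coalgebra.comul
    = (TensorProduct.assoc k C D D).symm.toLinearMap ∘ₗ
        (Coalgebra.comul (R := k) (A := D)).lTensor C := by
  have Ld : map LinearMap.id (pr2 (k := k) (C := C) (D := D)) ∘ₗ
        (tensorTensorTensorComm k C C D D).toLinearMap
      = (map LinearMap.id (TensorProduct.lid k D).toLinearMap ∘ₗ
          (tensorTensorTensorComm k C k D D).toLinearMap) ∘ₗ
          map ((Coalgebra.counit (R := k) (A := C)).lTensor C) LinearMap.id := by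
    ext; simp [pr2]
  have Sd : (map LinearMap.id (TensorProduct.lid k D).toLinearMap ∘ₗ
        (tensorTensorTensorComm k C k D D).toLinearMap) ∘ₗ
          (((TensorProduct.mk k C k).flip 1)).rTensor (D ⊗[k] D)
      = (TensorProduct.assoc k C D D).symm.toLinearMap := by
    ext; simp
  apply TensorProduct.ext'
  intro c d
  have e1 := LinearMap.congr_fun Ld (Coalgebra.comul c ⊗ₜ Coalgebra.comul d)
  simp only [comp_apply, LinearEquiv.coe_coe, map_tmul, id_coe, _root_.id,
    lTensor_counit_comul] at e1
  have e2 := LinearMap.congr_fun Sd (c ⊗ₜ Coalgebra.comul d)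
  simp only [comp_apply, LinearEquiv.coe_coe, rTensor_tmul, flip_apply,
    TensorProduct.mk_apply] at e2
  simp only [comp_apply, comul_tmul, LinearEquiv.coe_coe, lTensor_tmul, id_coe, _root_.id]
  rw [e1, e2]

end K12

section A3
variable [Coalgebra k C] [Coalgebra k D]
variable {M N : Type*} [AddCommGroup M] [Module k M] [AddCommGroup N] [Module k N]
variable {A : Type*} [Ring A] [Algebra k A]

lemma A3a (h : C →ₗ[k] k) (F : C →ₗ[k] M) (G : D →ₗ[k] N) :
    map (lact h F) G = lact (h ∘ₗ pr1) (map F G) := by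
  have S : (TensorProduct.lid k (M ⊗[k] N)).toLinearMap ∘ₗ map h (map F G) ∘ₗ
        (TensorProduct.assoc k C C D).toLinearMap
      = map ((TensorProduct.lid k M).toLinearMap ∘ₗ map h F) G := by
    ext; simp [smul_tmul']
  apply TensorProduct.ext'
  intro c d
  have e0 : map (h ∘ₗ pr1) (map F G) ∘ₗ (Coalgebra.comul (R := k) (A := C ⊗[k] D))
      = (map h (map F G)) ∘ₗ ((TensorProduct.assoc k C C D).toLinearMap ∘ₗ
          (Coalgebra.comul (R := k) (A := C)).rTensor D) := by
    rw [← K12a, ← comp_assoc, ← map_comp, comp_id]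
  have e1 := LinearMap.congr_fun e0 (c ⊗ₜ d)
  simp only [comp_apply, LinearEquiv.coe_coe, rTensor_tmul] at e1
  have e2 := LinearMap.congr_fun S (Coalgebra.comul c ⊗ₜ d)
  simp only [comp_apply, LinearEquiv.coe_coe, map_tmul] at e2
  simp only [lact, comp_apply, map_tmul, e1]
  exact e2.symm

lemma A3b (h : C →ₗ[k] k) (F : C →ₗ[k] M) (G : D →ₗ[k] N) :
    map (ract F h) G = ract (map F G) (h ∘ₗ pr1) := by
  have S : (TensorProduct.rid k (M ⊗[k] N)).toLinearMap ∘ₗ map (map F G) h ∘ₗ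
        ((TensorProduct.assoc k C D C).symm.toLinearMap ∘ₗ
          ((TensorProduct.comm k C D).toLinearMap).lTensor C ∘ₗ
          (TensorProduct.assoc k C C D).toLinearMap)
      = map ((TensorProduct.rid k M).toLinearMap ∘ₗ map F h) G := by
    ext; simp [smul_tmul']
  apply TensorProduct.ext'
  intro c d
  have e0 : map (map F G) (h ∘ₗ pr1) ∘ₗ (Coalgebra.comul (R := k) (A := C ⊗[k] D))
      = (map (map F G) h) ∘ₗ (((TensorProduct.assoc k C D C).symm.toLinearMap ∘ₗ
          ((TensorProduct.comm k C D).toLinearMap).lTensor C ∘ₗ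
          (TensorProduct.assoc k C C D).toLinearMap) ∘ₗ
          (Coalgebra.comul (R := k) (A := C)).rTensor D) := by
    rw [← K12b, ← comp_assoc, ← map_comp, comp_id]
  have e1 := LinearMap.congr_fun e0 (c ⊗ₜ d)
  simp only [comp_apply, LinearEquiv.coe_coe, rTensor_tmul] at e1
  have e2 := LinearMap.congr_fun S (Coalgebra.comul c ⊗ₜ d)
  simp only [comp_apply, LinearEquiv.coe_coe, map_tmul] at e2
  simp only [ract, comp_apply, map_tmul, e1]
  exact e2.symm

lemma A3c (h : D →ₗ[k] k) (F : D →ₗ[k] M) (G : C →ₗ[k] N) :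
    map G (lact h F) = lact (h ∘ₗ pr2) (map G F) := by
  have S : (TensorProduct.lid k (N ⊗[k] M)).toLinearMap ∘ₗ map h (map G F) ∘ₗ
        (TensorProduct.leftComm k C D D).toLinearMap
      = map G ((TensorProduct.lid k M).toLinearMap ∘ₗ map h F) := by
    ext; simp [smul_tmul']
  apply TensorProduct.ext'
  intro c d
  have e0 : map (h ∘ₗ pr2) (map G F) ∘ₗ (Coalgebra.comul (R := k) (A := C ⊗[k] D))
      = (map h (map G F)) ∘ₗ ((TensorProduct.leftComm k C D D).toLinearMap ∘ₗ
          (Coalgebra.comul (R := k) (A := D)).lTensor C) := by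
    rw [← K12c, ← comp_assoc, ← map_comp, comp_id]
  have e1 := LinearMap.congr_fun e0 (c ⊗ₜ d)
  simp only [comp_apply, LinearEquiv.coe_coe, lTensor_tmul] at e1
  have e2 := LinearMap.congr_fun S (c ⊗ₜ Coalgebra.comul d)
  simp only [comp_apply, LinearEquiv.coe_coe, map_tmul] at e2
  simp only [lact, comp_apply, map_tmul, e1]
  exact e2.symm

lemma A3d (h : D →ₗ[k] k) (F : D →ₗ[k] M) (G : C →ₗ[k] N) :
    map G (ract F h) = ract (map G F) (h ∘ₗ pr2) := by
  have S : (TensorProduct.rid k (N ⊗[k] M)).toLinearMap ∘ₗ map (map G F) h ∘ₗ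
        (TensorProduct.assoc k C D D).symm.toLinearMap
      = map G ((TensorProduct.rid k M).toLinearMap ∘ₗ map F h) := by
    ext; simp [smul_tmul']
  apply TensorProduct.ext'
  intro c d
  have e0 : map (map G F) (h ∘ₗ pr2) ∘ₗ (Coalgebra.comul (R := k) (A := C ⊗[k] D))
      = (map (map G F) h) ∘ₗ ((TensorProduct.assoc k C D D).symm.toLinearMap ∘ₗ
          (Coalgebra.comul (R := k) (A := D)).lTensor C) := by
    rw [← K12d, ← comp_assoc, ← map_comp, comp_id]
  have e1 := LinearMap.congr_fun e0 (c ⊗ₜ d)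
  simp only [comp_apply, LinearEquiv.coe_coe, lTensor_tmul] at e1
  have e2 := LinearMap.congr_fun S (c ⊗ₜ Coalgebra.comul d)
  simp only [comp_apply, LinearEquiv.coe_coe, map_tmul] at e2
  simp only [ract, comp_apply, map_tmul, e1]
  exact e2.symm

lemma icm_pr1 : IsCoalgMap (pr1 (k := k) (C := C) (D := D)) := by
  constructor
  · have L : map (pr1 (k := k) (C := C) (D := D)) pr1 ∘ₗ
        (tensorTensorTensorComm k C C D D).toLinearMap
      = (TensorProduct.rid k (C ⊗[k] C)).toLinearMap ∘ₗ
          (Coalgebra.counit (R := k) (A := D ⊗[k] D)).lTensor (C ⊗[k] C) := by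
      ext a b c d
      simp [pr1, counit_tmul, smul_tmul', mul_smul, smul_comm (Coalgebra.counit (R := k) c)]
    apply TensorProduct.ext'
    intro c d
    have e1 := LinearMap.congr_fun L (Coalgebra.comul c ⊗ₜ Coalgebra.comul d)
    simp only [comp_apply, LinearEquiv.coe_coe, lTensor_tmul] at e1
    have e2 : Coalgebra.counit (R := k) (A := D ⊗[k] D) (Coalgebra.comul d)
        = Coalgebra.counit (R := k) d := by
      have := LinearMap.congr_fun (counit_conv_counit (k := k) (C := D)) d
      simp only [comp_apply] at this
      exact this
    simp only [comp_apply, comul_tmul, pr1_tmul, map_smul, e1, e2]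
    simp
  · apply TensorProduct.ext'
    intro c d
    simp [pr1_tmul, counit_tmul, mul_comm]

lemma icm_pr2 : IsCoalgMap (pr2 (k := k) (C := C) (D := D)) := by
  constructor
  · have L : map (pr2 (k := k) (C := C) (D := D)) pr2 ∘ₗ
        (tensorTensorTensorComm k C C D D).toLinearMap
      = (TensorProduct.lid k (D ⊗[k] D)).toLinearMap ∘ₗ
          (Coalgebra.counit (R := k) (A := C ⊗[k] C)).rTensor (D ⊗[k] D) := by
      ext a b c d
      simp [pr2, counit_tmul, smul_tmul', mul_smul, smul_comm (Coalgebra.counit (R := k) a)]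
    apply TensorProduct.ext'
    intro c d
    have e1 := LinearMap.congr_fun L (Coalgebra.comul c ⊗ₜ Coalgebra.comul d)
    simp only [comp_apply, LinearEquiv.coe_coe, rTensor_tmul] at e1
    have e2 : Coalgebra.counit (R := k) (A := C ⊗[k] C) (Coalgebra.comul c)
        = Coalgebra.counit (R := k) c := by
      have := LinearMap.congr_fun (counit_conv_counit (k := k) (C := C)) c
      simp only [comp_apply] at this
      exact this
    simp only [comp_apply, comul_tmul, pr2_tmul, map_smul, e1, e2]
    simp
  · apply TensorProduct.ext'
    intro c d
    simp [pr2_tmul, counit_tmul, mul_comm]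

end A3

section ICM
variable [Coalgebra k C] [Coalgebra k D]
variable {E F : Type*} [AddCommGroup E] [Module k E] [Coalgebra k E]
  [AddCommGroup F] [Module k F] [Coalgebra k F]

lemma icm_map {f : C →ₗ[k] E} {g : D →ₗ[k] F} (hf : IsCoalgMap f) (hg : IsCoalgMap g) :
    IsCoalgMap (map f g) := by
  constructor
  · apply TensorProduct.ext'
    intro c d
    have hfc := LinearMap.congr_fun hf.1 c
    have hgd := LinearMap.congr_fun hg.1 d
    simp only [comp_apply] at hfc hgd
    have nat := LinearMap.congr_fun (ttc_natural (k := k) f f g g)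
      (Coalgebra.comul c ⊗ₜ Coalgebra.comul d)
    simp only [comp_apply, LinearEquiv.coe_coe, map_tmul] at nat
    simp only [comp_apply, map_tmul, comul_tmul, hfc, hgd, nat]
  · apply TensorProduct.ext'
    intro c d
    have hfc := LinearMap.congr_fun hf.2 c
    have hgd := LinearMap.congr_fun hg.2 d
    simp only [comp_apply] at hfc hgd
    simp only [comp_apply, map_tmul, counit_tmul, hfc, hgd]

lemma icm_assoc :
    IsCoalgMap ((TensorProduct.assoc k C D E).toLinearMap :
      (C ⊗[k] D) ⊗[k] E →ₗ[k] C ⊗[k] (D ⊗[k] E)) := by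
  constructor
  · have SA : map (TensorProduct.assoc k C D E).toLinearMap
          (TensorProduct.assoc k C D E).toLinearMap ∘ₗ
          (tensorTensorTensorComm k (C ⊗[k] D) (C ⊗[k] D) E E).toLinearMap ∘ₗ
          map (tensorTensorTensorComm k C C D D).toLinearMap LinearMap.id
        = (tensorTensorTensorComm k C C (D ⊗[k] E) (D ⊗[k] E)).toLinearMap ∘ₗ
            map LinearMap.id (tensorTensorTensorComm k D D E E).toLinearMap ∘ₗ
            (TensorProduct.assoc k (C ⊗[k] C) (D ⊗[k] D) (E ⊗[k] E)).toLinearMap := by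
      ext; simp
    apply TensorProduct.ext_threefold
    intro c d e
    have e1 := LinearMap.congr_fun SA
      ((Coalgebra.comul c ⊗ₜ Coalgebra.comul d) ⊗ₜ Coalgebra.comul e)
    simp only [comp_apply, LinearEquiv.coe_coe, map_tmul, id_coe, _root_.id,
      TensorProduct.assoc_tmul] at e1
    simp only [comp_apply, LinearEquiv.coe_coe, TensorProduct.assoc_tmul, map_tmul,
      comul_tmul, id_coe, _root_.id]
    exact e1.symm
  · apply TensorProduct.ext_threefold
    intro c d e
    simp [counit_tmul, mul_assoc]

end ICM

section K11
variable [Coalgebra k C] [Coalgebra k D]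
variable {A : Type*} [Ring A] [Algebra k A]

lemma K11a (h : C →ₗ[k] k) (v : D →ₗ[k] A) :
    conv (emb (h ∘ₗ pr1) : C ⊗[k] D →ₗ[k] A) (v ∘ₗ pr2)
      = conv (v ∘ₗ pr2) (emb (h ∘ₗ pr1)) := by
  rw [conv_emb_left, conv_emb_right]
  have Sk : (TensorProduct.lid k A).toLinearMap ∘ₗ map h v
      = (TensorProduct.rid k A).toLinearMap ∘ₗ map v h ∘ₗ (TensorProduct.comm k C D).toLinearMap := by
    ext; simp
  apply LinearMap.ext; intro w
  have l1 : map (h ∘ₗ pr1) (v ∘ₗ pr2) (Coalgebra.comul w)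
      = map h v (map pr1 pr2 (Coalgebra.comul w)) := by
    rw [← comp_apply (map h v) (map pr1 pr2), ← map_comp]
  have l2 : map (v ∘ₗ pr2) (h ∘ₗ pr1) (Coalgebra.comul w)
      = map v h (map pr2 pr1 (Coalgebra.comul w)) := by
    rw [← comp_apply (map v h) (map pr2 pr1), ← map_comp]
  have m1 := LinearMap.congr_fun (map_pr1_pr2_comul (k := k) (C := C) (D := D)) w
  have m2 := LinearMap.congr_fun (map_pr2_pr1_comul (k := k) (C := C) (D := D)) w
  simp only [comp_apply, id_coe, _root_.id, LinearEquiv.coe_coe] at m1 m2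
  have sk := LinearMap.congr_fun Sk w
  simp only [comp_apply, LinearEquiv.coe_coe] at sk
  show (TensorProduct.lid k A) (map (h ∘ₗ pr1) (v ∘ₗ pr2) (Coalgebra.comul w))
    = (TensorProduct.rid k A) (map (v ∘ₗ pr2) (h ∘ₗ pr1) (Coalgebra.comul w))
  rw [l1, l2, m1, m2, sk]

lemma K11b (h : D →ₗ[k] k) (u : C →ₗ[k] A) :
    conv (emb (h ∘ₗ pr2) : C ⊗[k] D →ₗ[k] A) (u ∘ₗ pr1)
      = conv (u ∘ₗ pr1) (emb (h ∘ₗ pr2)) := by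
  rw [conv_emb_left, conv_emb_right]
  have Sk : (TensorProduct.lid k A).toLinearMap ∘ₗ map h u ∘ₗ (TensorProduct.comm k C D).toLinearMap
      = (TensorProduct.rid k A).toLinearMap ∘ₗ map u h := by
    ext; simp
  apply LinearMap.ext; intro w
  have l1 : map (h ∘ₗ pr2) (u ∘ₗ pr1) (Coalgebra.comul w)
      = map h u (map pr2 pr1 (Coalgebra.comul w)) := by
    rw [← comp_apply (map h u) (map pr2 pr1), ← map_comp]
  have l2 : map (u ∘ₗ pr1) (h ∘ₗ pr2) (Coalgebra.comul w)
      = map u h (map pr1 pr2 (Coalgebra.comul w)) := by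
    rw [← comp_apply (map u h) (map pr1 pr2), ← map_comp]
  have m1 := LinearMap.congr_fun (map_pr1_pr2_comul (k := k) (C := C) (D := D)) w
  have m2 := LinearMap.congr_fun (map_pr2_pr1_comul (k := k) (C := C) (D := D)) w
  simp only [comp_apply, id_coe, _root_.id, LinearEquiv.coe_coe] at m1 m2
  have sk := LinearMap.congr_fun Sk w
  simp only [comp_apply, LinearEquiv.coe_coe] at sk
  show (TensorProduct.lid k A) (map (h ∘ₗ pr2) (u ∘ₗ pr1) (Coalgebra.comul w))
    = (TensorProduct.rid k A) (map (u ∘ₗ pr1) (h ∘ₗ pr2) (Coalgebra.comul w))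
  rw [l1, l2, m1, m2, sk]

end K11

section Bialg
variable {H : Type*} [Ring H] [Bialgebra k H]

lemma B2 : map (mul' k H) (mul' k H) ∘ₗ (tensorTensorTensorComm k H H H H).toLinearMap
    = mul' k (H ⊗[k] H) := by
  ext
  simp [Algebra.TensorProduct.tmul_mul_tmul]

lemma icm_mul : IsCoalgMap (mul' k H : H ⊗[k] H →ₗ[k] H) := by
  constructor
  · apply TensorProduct.ext'
    intro x y
    have e1 := LinearMap.congr_fun (B2 (k := k) (H := H)) (Coalgebra.comul x ⊗ₜ Coalgebra.comul y)
    simp only [comp_apply, LinearEquiv.coe_coe] at e1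
    simp only [comp_apply, map_tmul, mul'_apply, comul_tmul, e1]
    simp [Bialgebra.comul_mul]
  · apply TensorProduct.ext'
    intro x y
    simp [counit_tmul, Bialgebra.counit_mul]

/-- `x ↦ 1 ⊗ x`. -/
def mkl : H →ₗ[k] H ⊗[k] H := TensorProduct.mk k H H 1

/-- `x ↦ x ⊗ 1`. -/
def mkr : H →ₗ[k] H ⊗[k] H := (TensorProduct.mk k H H).flip 1

lemma icm_mkl : IsCoalgMap (mkl : H →ₗ[k] H ⊗[k] H) := by
  constructor
  · have Sm : (tensorTensorTensorComm k H H H H).toLinearMap ∘ₗ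
        (TensorProduct.mk k (H ⊗[k] H) (H ⊗[k] H) ((1 : H) ⊗ₜ (1 : H)))
        = map (mkl : H →ₗ[k] H ⊗[k] H) mkl := by
      ext; simp [mkl]
    apply LinearMap.ext; intro x
    have e1 := LinearMap.congr_fun Sm (Coalgebra.comul x)
    simp only [comp_apply, LinearEquiv.coe_coe, TensorProduct.mk_apply] at e1
    simp only [comp_apply, mkl, TensorProduct.mk_apply, comul_tmul, Bialgebra.comul_one]
    exact e1
  · apply LinearMap.ext; intro x
    simp [mkl, counit_tmul, Bialgebra.counit_one]

lemma icm_mkr : IsCoalgMap (mkr : H →ₗ[k] H ⊗[k] H) := by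
  constructor
  · have Sm : (tensorTensorTensorComm k H H H H).toLinearMap ∘ₗ
        ((TensorProduct.mk k (H ⊗[k] H) (H ⊗[k] H)).flip ((1 : H) ⊗ₜ (1 : H)))
        = map (mkr : H →ₗ[k] H ⊗[k] H) mkr := by
      ext; simp [mkr]
    apply LinearMap.ext; intro x
    have e1 := LinearMap.congr_fun Sm (Coalgebra.comul x)
    simp only [comp_apply, LinearEquiv.coe_coe, flip_apply, TensorProduct.mk_apply] at e1
    simp only [comp_apply, mkr, flip_apply, TensorProduct.mk_apply, comul_tmul,
      Bialgebra.comul_one]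
    exact e1
  · apply LinearMap.ext; intro x
    simp [mkr, counit_tmul, Bialgebra.counit_one]

lemma mul_mkl : mul' k H ∘ₗ (mkl : H →ₗ[k] H ⊗[k] H) = LinearMap.id := by
  apply LinearMap.ext; intro x; simp [mkl]

lemma mul_mkr : mul' k H ∘ₗ (mkr : H →ₗ[k] H ⊗[k] H) = LinearMap.id := by
  apply LinearMap.ext; intro x; simp [mkr]

lemma mulassoc3 : mul' k H ∘ₗ map LinearMap.id (mul' k H) ∘ₗ
      (TensorProduct.assoc k H H H).toLinearMap
    = mul' k H ∘ₗ map (mul' k H) LinearMap.id := by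
  ext; simp [mul_assoc]

lemma counit_linearMap : (Coalgebra.counit (R := k) (A := H)) ∘ₗ Algebra.linearMap k H
    = LinearMap.id := by
  apply LinearMap.ext; intro r; simp

lemma comulAlgHom_lin : (Bialgebra.comulAlgHom k H).toLinearMap = Coalgebra.comul := by
  apply LinearMap.ext; intro x; simp

lemma counitAlgHom_lin : (Bialgebra.counitAlgHom k H).toLinearMap = Coalgebra.counit := by
  apply LinearMap.ext; intro x; simp

end Bialg

end CT

variable (k : Type*) [Field k] (H : Type*) [Ring H] [Bialgebra k H]

/-- The comultiplication of `H ⊗ H`: `x ⊗ y ↦ (x₍₁₎ ⊗ y₍₁₎) ⊗ (x₍₂₎ ⊗ y₍₂₎)`. -/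
def comul2 : H ⊗[k] H →ₗ[k] (H ⊗[k] H) ⊗[k] (H ⊗[k] H) :=
  (TensorProduct.tensorTensorTensorComm k H H H H).toLinearMap
    ∘ₗ TensorProduct.map (Coalgebra.comul (R := k) (A := H)) (Coalgebra.comul (R := k) (A := H))

/-- Convolution product of two linear functionals on `H ⊗ H`. -/
def conv2 (σ σ' : H ⊗[k] H →ₗ[k] k) : H ⊗[k] H →ₗ[k] k :=
  (LinearMap.mul' k k) ∘ₗ TensorProduct.map σ σ' ∘ₗ comul2 k H

/-- The counit of `H ⊗ H`. -/
def epsilon2 : H ⊗[k] H →ₗ[k] k :=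
  (LinearMap.mul' k k) ∘ₗ
    TensorProduct.map (Coalgebra.counit (R := k) (A := H)) (Coalgebra.counit (R := k) (A := H))

/-- Normalization of a 2-cochain: `σ(1, x) = ε(x) = σ(x, 1)`. -/
def IsNormalized (σ : H ⊗[k] H →ₗ[k] k) : Prop :=
  ∀ x : H, σ ((1 : H) ⊗ₜ[k] x) = Coalgebra.counit (R := k) (A := H) x
    ∧ σ (x ⊗ₜ[k] (1 : H)) = Coalgebra.counit (R := k) (A := H) x

/-- `x ⊗ (y ⊗ z) ↦ σ(y₍₁₎, z₍₁₎) σ(x, y₍₂₎z₍₂₎)`. -/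
def cocLHS (σ : H ⊗[k] H →ₗ[k] k) : H ⊗[k] (H ⊗[k] H) →ₗ[k] k :=
  (LinearMap.mul' k k)
    ∘ₗ TensorProduct.map σ (σ ∘ₗ TensorProduct.map LinearMap.id (LinearMap.mul' k H))
    ∘ₗ (TensorProduct.leftComm k H (H ⊗[k] H) (H ⊗[k] H)).toLinearMap
    ∘ₗ TensorProduct.map LinearMap.id (comul2 k H)

/-- `x ⊗ (y ⊗ z) ↦ σ(x₍₁₎, y₍₁₎) σ(x₍₂₎y₍₂₎, z)`. -/
def cocRHS (σ : H ⊗[k] H →ₗ[k] k) : H ⊗[k] (H ⊗[k] H) →ₗ[k] k :=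
  (LinearMap.mul' k k)
    ∘ₗ TensorProduct.map σ (σ ∘ₗ TensorProduct.map (LinearMap.mul' k H) LinearMap.id)
    ∘ₗ (TensorProduct.assoc k (H ⊗[k] H) (H ⊗[k] H) H).toLinearMap
    ∘ₗ TensorProduct.map (comul2 k H) LinearMap.id
    ∘ₗ (TensorProduct.assoc k H H H).symm.toLinearMap

/-- `σ` is a normalized 2-cocycle: `σ(x, σ(y₁,z₁)y₂z₂) = σ(σ(x₁,y₁)x₂y₂, z)`. -/
def IsCocycle (σ : H ⊗[k] H →ₗ[k] k) : Prop :=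
  IsNormalized k H σ ∧ cocLHS k H σ = cocRHS k H σ

/-- The comultiplication of `H ⊗ (H ⊗ H)` (diagonal on all three factors). -/
def comul3 : H ⊗[k] (H ⊗[k] H) →ₗ[k]
    (H ⊗[k] (H ⊗[k] H)) ⊗[k] (H ⊗[k] (H ⊗[k] H)) :=
  (TensorProduct.tensorTensorTensorComm k H H (H ⊗[k] H) (H ⊗[k] H)).toLinearMap
    ∘ₗ TensorProduct.map (Coalgebra.comul (R := k) (A := H)) (comul2 k H)

/-- Convolution product of two linear functionals on `H ⊗ (H ⊗ H)`. -/
def conv3 (f g : H ⊗[k] (H ⊗[k] H) →ₗ[k] k) : H ⊗[k] (H ⊗[k] H) →ₗ[k] k :=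
  (LinearMap.mul' k k) ∘ₗ TensorProduct.map f g ∘ₗ comul3 k H

/-- The cocycle-twisted multiplication `x ·_σ y = σ(x₁, y₁) x₂y₂ σ'(x₃, y₃)`. -/
def twmul (σ σ' : H ⊗[k] H →ₗ[k] k) : H ⊗[k] H →ₗ[k] H :=
  (TensorProduct.rid k H).toLinearMap
    ∘ₗ TensorProduct.map
        ((TensorProduct.lid k H).toLinearMap ∘ₗ TensorProduct.map σ (LinearMap.mul' k H)) σ'
    ∘ₗ TensorProduct.map (comul2 k H) LinearMap.id
    ∘ₗ comul2 k H


section Main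
open CT

private lemma comul2_eq : comul2 k H = Coalgebra.comul (R := k) (A := H ⊗[k] H) := rfl

private lemma epsilon2_eq : epsilon2 k H = Coalgebra.counit (R := k) (A := H ⊗[k] H) := rfl

private lemma conv2_eq (a b : H ⊗[k] H →ₗ[k] k) : conv2 k H a b = conv a b := rfl

private lemma emb_k {C : Type*} [AddCommGroup C] [Module k C] [Coalgebra k C]
    (f : C →ₗ[k] k) : (emb f : C →ₗ[k] k) = f := by
  apply LinearMap.ext; intro c; simp [emb]

private lemma twmul_eq (σ σ' : H ⊗[k] H →ₗ[k] k) :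
    twmul k H σ σ' = conv (conv (emb σ) (mul' k H)) (emb σ') := by
  have S : (TensorProduct.rid k H).toLinearMap ∘ₗ
      map ((TensorProduct.lid k H).toLinearMap ∘ₗ map σ (mul' k H)) σ'
    = mul' k H ∘ₗ map (mul' k H ∘ₗ map (emb σ : H ⊗[k] H →ₗ[k] H) (mul' k H))
        (emb σ' : H ⊗[k] H →ₗ[k] H) := by
    ext
    simp [emb, Algebra.algebraMap_eq_smul_one, smul_mul_assoc, mul_smul_comm, smul_smul,
      mul_comm]
  apply LinearMap.ext; intro x
  have l1 : map (conv (emb σ : H ⊗[k] H →ₗ[k] H) (mul' k H)) (emb σ' : H ⊗[k] H →ₗ[k] H)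
        (Coalgebra.comul x)
      = (map (mul' k H ∘ₗ map (emb σ) (mul' k H)) (emb σ'))
          ((map Coalgebra.comul LinearMap.id) (Coalgebra.comul x)) := by
    rw [← comp_apply (map _ _) (map Coalgebra.comul LinearMap.id), ← map_comp, comp_id]
    rfl
  have e1 := LinearMap.congr_fun S
    ((map Coalgebra.comul LinearMap.id) (Coalgebra.comul x))
  simp only [comp_apply, LinearEquiv.coe_coe] at e1
  show (TensorProduct.rid k H)
      ((map ((TensorProduct.lid k H).toLinearMap ∘ₗ map σ (mul' k H)) σ')
        ((map (comul2 k H) LinearMap.id) (comul2 k H x)))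
    = mul' k H (map (conv (emb σ) (mul' k H)) (emb σ') (Coalgebra.comul x))
  rw [l1, comul2_eq]
  exact e1

private lemma part5 (σ σ' : H ⊗[k] H →ₗ[k] k) (hinv₁ : conv2 k H σ σ' = epsilon2 k H) :
    (Coalgebra.counit (R := k) (A := H)) ∘ₗ twmul k H σ σ' = epsilon2 k H := by
  rw [twmul_eq, ← counitAlgHom_lin (k := k) (H := H), comp_conv, comp_conv,
    algHom_emb, algHom_emb, counitAlgHom_lin, (icm_mul (k := k) (H := H)).2,
    emb_k, emb_k]
  rw [show (Coalgebra.counit : H ⊗[k] H →ₗ[k] k) = CT.convOne from (one_eq_counit).symm, conv_one,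
    ← conv2_eq, hinv₁]

private lemma part4 (σ σ' : H ⊗[k] H →ₗ[k] k) (hinv₂ : conv2 k H σ' σ = epsilon2 k H) :
    (Coalgebra.comul (R := k) (A := H)) ∘ₗ twmul k H σ σ'
      = map (twmul k H σ σ') (twmul k H σ σ') ∘ₗ comul2 k H := by
  rw [twmul_eq, comul2_eq, ← conv_includeLR]
  have hz : conv (emb σ' : H ⊗[k] H →ₗ[k] H ⊗[k] H) (emb σ) = CT.convOne := by
    rw [← emb_conv, ← conv2_eq, hinv₂, epsilon2_eq, emb_counit]
  have hL : ((Algebra.TensorProduct.includeLeft : H →ₐ[k] H ⊗[k] H)).toLinearMap ∘ₗ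
        (conv (conv (emb σ) (mul' k H)) (emb σ'))
      = conv (conv (emb σ)
          (((Algebra.TensorProduct.includeLeft : H →ₐ[k] H ⊗[k] H)).toLinearMap ∘ₗ mul' k H))
          (emb σ') := by
    rw [comp_conv, comp_conv, algHom_emb, algHom_emb]
  have hR : ((Algebra.TensorProduct.includeRight : H →ₐ[k] H ⊗[k] H)).toLinearMap ∘ₗ
        (conv (conv (emb σ) (mul' k H)) (emb σ'))
      = conv (conv (emb σ)
          (((Algebra.TensorProduct.includeRight : H →ₐ[k] H ⊗[k] H)).toLinearMap ∘ₗ mul' k H))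
          (emb σ') := by
    rw [comp_conv, comp_conv, algHom_emb, algHom_emb]
  rw [hL, hR, conv_flatten _ _ _ _ _ _ hz]
  have e2 : conv (conv (conv (emb σ)
        (((Algebra.TensorProduct.includeLeft : H →ₐ[k] H ⊗[k] H)).toLinearMap ∘ₗ mul' k H))
        (((Algebra.TensorProduct.includeRight : H →ₐ[k] H ⊗[k] H)).toLinearMap ∘ₗ mul' k H))
        (emb σ')
      = conv (conv (emb σ) ((Coalgebra.comul (R := k) (A := H)) ∘ₗ mul' k H)) (emb σ') := by
    rw [conv_assoc (emb σ), conv_includeLR, ← (icm_mul (k := k) (H := H)).1]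
  rw [e2]
  conv_lhs => rw [← comulAlgHom_lin (k := k) (H := H)]
  rw [comp_conv, comp_conv, algHom_emb, algHom_emb, comulAlgHom_lin]

private lemma key_mkl (σ σ' : H ⊗[k] H →ₗ[k] k)
    (hnorm : IsNormalized k H σ) (hinv₂ : conv2 k H σ' σ = epsilon2 k H) :
    twmul k H σ σ' ∘ₗ (mkl : H →ₗ[k] H ⊗[k] H) = LinearMap.id := by
  have hσ : σ ∘ₗ (mkl : H →ₗ[k] H ⊗[k] H) = Coalgebra.counit := by
    apply LinearMap.ext; intro x
    simpa [mkl] using (hnorm x).1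
  have hσ' : σ' ∘ₗ (mkl : H →ₗ[k] H ⊗[k] H) = Coalgebra.counit := by
    have e : conv (σ' ∘ₗ (mkl : H →ₗ[k] H ⊗[k] H)) (σ ∘ₗ mkl) = Coalgebra.counit := by
      rw [← conv_precomp _ _ icm_mkl, ← conv2_eq, hinv₂, epsilon2_eq]
      exact (icm_mkl (k := k) (H := H)).2
    rw [hσ] at e
    rw [← e, show (Coalgebra.counit : H →ₗ[k] k) = CT.convOne from (one_eq_counit).symm, conv_one]
  rw [twmul_eq, conv_precomp _ _ icm_mkl, conv_precomp _ _ icm_mkl,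
    emb_precomp, emb_precomp, mul_mkl, hσ, hσ', emb_counit, one_conv, conv_one]

private lemma key_mkr (σ σ' : H ⊗[k] H →ₗ[k] k)
    (hnorm : IsNormalized k H σ) (hinv₂ : conv2 k H σ' σ = epsilon2 k H) :
    twmul k H σ σ' ∘ₗ (mkr : H →ₗ[k] H ⊗[k] H) = LinearMap.id := by
  have hσ : σ ∘ₗ (mkr : H →ₗ[k] H ⊗[k] H) = Coalgebra.counit := by
    apply LinearMap.ext; intro x
    simpa [mkr] using (hnorm x).2
  have hσ' : σ' ∘ₗ (mkr : H →ₗ[k] H ⊗[k] H) = Coalgebra.counit := by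
    have e : conv (σ' ∘ₗ (mkr : H →ₗ[k] H ⊗[k] H)) (σ ∘ₗ mkr) = Coalgebra.counit := by
      rw [← conv_precomp _ _ icm_mkr, ← conv2_eq, hinv₂, epsilon2_eq]
      exact (icm_mkr (k := k) (H := H)).2
    rw [hσ] at e
    rw [← e, show (Coalgebra.counit : H →ₗ[k] k) = CT.convOne from (one_eq_counit).symm, conv_one]
  rw [twmul_eq, conv_precomp _ _ icm_mkr, conv_precomp _ _ icm_mkr,
    emb_precomp, emb_precomp, mul_mkr, hσ, hσ', emb_counit, one_conv, conv_one]

set_option maxHeartbeats 2000000 in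
private lemma part1 (σ σ' : H ⊗[k] H →ₗ[k] k)
    (hcoc : IsCocycle k H σ)
    (hinv₁ : conv2 k H σ σ' = epsilon2 k H)
    (hinv₂ : conv2 k H σ' σ = epsilon2 k H) :
    twmul k H σ σ' ∘ₗ map (twmul k H σ σ') LinearMap.id
      = twmul k H σ σ' ∘ₗ map LinearMap.id (twmul k H σ σ')
          ∘ₗ (TensorProduct.assoc k H H H).toLinearMap := by
  have hTc : IsCoalgMap (conv (conv (emb σ) (mul' k H)) (emb σ' : H ⊗[k] H →ₗ[k] H)) := by
    constructor
    · have h4 := part4 k H σ σ' hinv₂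
      rw [twmul_eq, comul2_eq] at h4
      exact h4
    · have h5 := part5 k H σ σ' hinv₁
      rw [twmul_eq, epsilon2_eq] at h5
      exact h5
  have hα : IsCoalgMap ((TensorProduct.assoc k H H H).toLinearMap :
      (H ⊗[k] H) ⊗[k] H →ₗ[k] H ⊗[k] (H ⊗[k] H)) := icm_assoc
  have hTact : conv (conv (emb σ) (mul' k H)) (emb σ' : H ⊗[k] H →ₗ[k] H)
      = lact σ (ract (mul' k H) σ') := by
    rw [conv_assoc, conv_emb_right, conv_emb_left]
  -- abbreviations (just for readability in comments):
  -- a = σ∘pr1, b = σ∘(m⊗id), a' = σ'∘pr1, b' = σ'∘(m⊗id) on (H⊗H)⊗H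
  -- c = σ∘pr2, d = σ∘(id⊗m), c' = σ'∘pr2, d' = σ'∘(id⊗m) on H⊗(H⊗H)
  have s2 : σ ∘ₗ map (conv (conv (emb σ) (mul' k H)) (emb σ' : H ⊗[k] H →ₗ[k] H))
        LinearMap.id
      = conv (conv (σ ∘ₗ pr1) (σ ∘ₗ map (mul' k H) LinearMap.id)) (σ' ∘ₗ pr1) := by
    rw [hTact, A3a, A3b, comp_lact, comp_ract, lact_conv, ract_conv, ← conv_assoc]
  have s3 : σ' ∘ₗ map (conv (conv (emb σ) (mul' k H)) (emb σ' : H ⊗[k] H →ₗ[k] H))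
        LinearMap.id
      = conv (conv (σ ∘ₗ pr1) (σ' ∘ₗ map (mul' k H) LinearMap.id)) (σ' ∘ₗ pr1) := by
    rw [hTact, A3a, A3b, comp_lact, comp_ract, lact_conv, ract_conv, ← conv_assoc]
  have k1 : conv (emb (σ' ∘ₗ pr1) : (H ⊗[k] H) ⊗[k] H →ₗ[k] H) pr2
      = conv pr2 (emb (σ' ∘ₗ pr1)) := by
    have h := K11a (k := k) (C := H ⊗[k] H) (D := H) σ' (LinearMap.id : H →ₗ[k] H)
    rwa [id_comp] at h
  have k2 : conv (mul' k H ∘ₗ pr1) (pr2 : (H ⊗[k] H) ⊗[k] H →ₗ[k] H)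
      = mul' k H ∘ₗ map (mul' k H) LinearMap.id := by
    have h := mul'_map_eq_conv (k := k) (C := H ⊗[k] H) (D := H) (mul' k H)
      (LinearMap.id : H →ₗ[k] H)
    rw [id_comp] at h
    exact h.symm
  have s4 : mul' k H ∘ₗ map (conv (conv (emb σ) (mul' k H)) (emb σ' : H ⊗[k] H →ₗ[k] H))
        LinearMap.id
      = conv (conv (emb (σ ∘ₗ pr1)) (mul' k H ∘ₗ map (mul' k H) LinearMap.id))
          (emb (σ' ∘ₗ pr1)) := by
    rw [mul'_map_eq_conv, id_comp, conv_precomp _ _ icm_pr1, conv_precomp _ _ icm_pr1,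
      emb_precomp, emb_precomp]
    rw [conv_assoc (conv (emb (σ ∘ₗ pr1)) (mul' k H ∘ₗ pr1)) (emb (σ' ∘ₗ pr1)) pr2, k1,
      ← conv_assoc (conv (emb (σ ∘ₗ pr1)) (mul' k H ∘ₗ pr1)) pr2 (emb (σ' ∘ₗ pr1)),
      conv_assoc (emb (σ ∘ₗ pr1)) (mul' k H ∘ₗ pr1) pr2, k2]
  -- mirrors on H ⊗ (H ⊗ H)
  have s2' : σ ∘ₗ map LinearMap.id
        (conv (conv (emb σ) (mul' k H)) (emb σ' : H ⊗[k] H →ₗ[k] H))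
      = conv (conv (σ ∘ₗ pr2) (σ ∘ₗ map LinearMap.id (mul' k H))) (σ' ∘ₗ pr2) := by
    rw [hTact, A3c, A3d, comp_lact, comp_ract, lact_conv, ract_conv, ← conv_assoc]
  have s3' : σ' ∘ₗ map LinearMap.id
        (conv (conv (emb σ) (mul' k H)) (emb σ' : H ⊗[k] H →ₗ[k] H))
      = conv (conv (σ ∘ₗ pr2) (σ' ∘ₗ map LinearMap.id (mul' k H))) (σ' ∘ₗ pr2) := by
    rw [hTact, A3c, A3d, comp_lact, comp_ract, lact_conv, ract_conv, ← conv_assoc]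
  have k1' : conv (emb (σ ∘ₗ pr2) : H ⊗[k] (H ⊗[k] H) →ₗ[k] H) pr1
      = conv pr1 (emb (σ ∘ₗ pr2)) := by
    have h := K11b (k := k) (C := H) (D := H ⊗[k] H) σ (LinearMap.id : H →ₗ[k] H)
    rwa [id_comp] at h
  have k2' : conv (pr1 : H ⊗[k] (H ⊗[k] H) →ₗ[k] H) (mul' k H ∘ₗ pr2)
      = mul' k H ∘ₗ map LinearMap.id (mul' k H) := by
    have h := mul'_map_eq_conv (k := k) (C := H) (D := H ⊗[k] H)
      (LinearMap.id : H →ₗ[k] H) (mul' k H)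
    rw [id_comp] at h
    exact h.symm
  have s4' : mul' k H ∘ₗ map LinearMap.id
        (conv (conv (emb σ) (mul' k H)) (emb σ' : H ⊗[k] H →ₗ[k] H))
      = conv (conv (emb (σ ∘ₗ pr2)) (mul' k H ∘ₗ map LinearMap.id (mul' k H)))
          (emb (σ' ∘ₗ pr2)) := by
    rw [mul'_map_eq_conv, id_comp, conv_precomp _ _ icm_pr2, conv_precomp _ _ icm_pr2,
      emb_precomp, emb_precomp]
    rw [← conv_assoc pr1 (conv (emb (σ ∘ₗ pr2)) (mul' k H ∘ₗ pr2)) (emb (σ' ∘ₗ pr2)),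
      ← conv_assoc pr1 (emb (σ ∘ₗ pr2)) (mul' k H ∘ₗ pr2), ← k1',
      conv_assoc (emb (σ ∘ₗ pr2)) pr1 (mul' k H ∘ₗ pr2), k2']
  -- cancellation units
  have ha'a : conv (σ' ∘ₗ pr1) (σ ∘ₗ (pr1 : (H ⊗[k] H) ⊗[k] H →ₗ[k] H ⊗[k] H))
      = CT.convOne := by
    rw [← conv_precomp _ _ icm_pr1, ← conv2_eq, hinv₂, epsilon2_eq,
      (icm_pr1 (k := k) (C := H ⊗[k] H) (D := H)).2, ← one_eq_counit]
  have haa' : conv (σ ∘ₗ pr1) (σ' ∘ₗ (pr1 : (H ⊗[k] H) ⊗[k] H →ₗ[k] H ⊗[k] H))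
      = CT.convOne := by
    rw [← conv_precomp _ _ icm_pr1, ← conv2_eq, hinv₁, epsilon2_eq,
      (icm_pr1 (k := k) (C := H ⊗[k] H) (D := H)).2, ← one_eq_counit]
  have hc'c : conv (σ' ∘ₗ pr2) (σ ∘ₗ (pr2 : H ⊗[k] (H ⊗[k] H) →ₗ[k] H ⊗[k] H))
      = CT.convOne := by
    rw [← conv_precomp _ _ icm_pr2, ← conv2_eq, hinv₂, epsilon2_eq,
      (icm_pr2 (k := k) (C := H) (D := H ⊗[k] H)).2, ← one_eq_counit]
  have hcc' : conv (σ ∘ₗ pr2) (σ' ∘ₗ (pr2 : H ⊗[k] (H ⊗[k] H) →ₗ[k] H ⊗[k] H))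
      = CT.convOne := by
    rw [← conv_precomp _ _ icm_pr2, ← conv2_eq, hinv₁, epsilon2_eq,
      (icm_pr2 (k := k) (C := H) (D := H ⊗[k] H)).2, ← one_eq_counit]
  have hmm1 : IsCoalgMap (map (mul' k H) (LinearMap.id : H →ₗ[k] H)) :=
    icm_map icm_mul icm_id
  have hmm2 : IsCoalgMap (map (LinearMap.id : H →ₗ[k] H) (mul' k H)) :=
    icm_map icm_id icm_mul
  have hbb' : conv (σ ∘ₗ map (mul' k H) LinearMap.id)
      (σ' ∘ₗ map (mul' k H) (LinearMap.id : H →ₗ[k] H)) = CT.convOne := by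
    rw [← conv_precomp _ _ hmm1, ← conv2_eq, hinv₁, epsilon2_eq, hmm1.2, ← one_eq_counit]
  have hb'b : conv (σ' ∘ₗ map (mul' k H) LinearMap.id)
      (σ ∘ₗ map (mul' k H) (LinearMap.id : H →ₗ[k] H)) = CT.convOne := by
    rw [← conv_precomp _ _ hmm1, ← conv2_eq, hinv₂, epsilon2_eq, hmm1.2, ← one_eq_counit]
  have hdd' : conv (σ ∘ₗ map LinearMap.id (mul' k H))
      (σ' ∘ₗ map (LinearMap.id : H →ₗ[k] H) (mul' k H)) = CT.convOne := by
    rw [← conv_precomp _ _ hmm2, ← conv2_eq, hinv₁, epsilon2_eq, hmm2.2, ← one_eq_counit]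
  -- cocycle identification
  have Ia : cocRHS k H σ ∘ₗ (TensorProduct.assoc k H H H).toLinearMap
      = conv (σ ∘ₗ pr1) (σ ∘ₗ map (mul' k H) LinearMap.id) := by
    apply LinearMap.ext; intro w
    have k12 := LinearMap.congr_fun (K12a (k := k) (C := H ⊗[k] H) (D := H)) w
    simp only [comp_apply, LinearEquiv.coe_coe] at k12
    have mc : map (σ ∘ₗ pr1) (σ ∘ₗ map (mul' k H) LinearMap.id) (Coalgebra.comul w)
        = map σ (σ ∘ₗ map (mul' k H) LinearMap.id)
            (map pr1 LinearMap.id (Coalgebra.comul w)) := by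
      rw [← comp_apply (map σ _) (map pr1 _), ← map_comp, comp_id]
    show cocRHS k H σ ((TensorProduct.assoc k H H H) w)
      = mul' k k (map _ _ (Coalgebra.comul w))
    rw [mc, k12]
    simp only [cocRHS, comp_apply, LinearEquiv.coe_coe, LinearEquiv.symm_apply_apply]
    rfl
  have Ib : cocLHS k H σ = conv (σ ∘ₗ pr2) (σ ∘ₗ map LinearMap.id (mul' k H)) := by
    apply LinearMap.ext; intro w
    have k12 := LinearMap.congr_fun (K12c (k := k) (C := H) (D := H ⊗[k] H)) w
    simp only [comp_apply, LinearEquiv.coe_coe] at k12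
    have mc : map (σ ∘ₗ pr2) (σ ∘ₗ map LinearMap.id (mul' k H)) (Coalgebra.comul w)
        = map σ (σ ∘ₗ map LinearMap.id (mul' k H))
            (map pr2 LinearMap.id (Coalgebra.comul w)) := by
      rw [← comp_apply (map σ _) (map pr2 _), ← map_comp, comp_id]
    show cocLHS k H σ w = mul' k k (map _ _ (Coalgebra.comul w))
    rw [mc, k12]
    simp only [cocLHS, comp_apply, LinearEquiv.coe_coe]
    rfl
  have keyI : conv (σ ∘ₗ pr1) (σ ∘ₗ map (mul' k H) LinearMap.id)
      = conv ((σ ∘ₗ pr2) ∘ₗ (TensorProduct.assoc k H H H).toLinearMap)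
          ((σ ∘ₗ map LinearMap.id (mul' k H)) ∘ₗ (TensorProduct.assoc k H H H).toLinearMap) := by
    rw [← conv_precomp _ _ hα, ← Ib, hcoc.2, Ia]
  -- inverse uniqueness
  have r1 : conv (conv (σ ∘ₗ pr1) (σ ∘ₗ map (mul' k H) LinearMap.id))
      (conv (σ' ∘ₗ map (mul' k H) LinearMap.id)
        (σ' ∘ₗ (pr1 : (H ⊗[k] H) ⊗[k] H →ₗ[k] H ⊗[k] H))) = CT.convOne := by
    rw [conv_assoc, ← conv_assoc (σ ∘ₗ map (mul' k H) LinearMap.id), hbb', one_conv, haa']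
  have r2 : conv (conv (σ' ∘ₗ map (mul' k H) LinearMap.id)
        (σ' ∘ₗ (pr1 : (H ⊗[k] H) ⊗[k] H →ₗ[k] H ⊗[k] H)))
      (conv (σ ∘ₗ pr1) (σ ∘ₗ map (mul' k H) LinearMap.id)) = CT.convOne := by
    rw [conv_assoc, ← conv_assoc (σ' ∘ₗ pr1), ha'a, one_conv, hb'b]
  have r3 : conv (conv (σ ∘ₗ pr1) (σ ∘ₗ map (mul' k H) LinearMap.id))
      (conv ((σ' ∘ₗ map LinearMap.id (mul' k H)) ∘ₗ (TensorProduct.assoc k H H H).toLinearMap)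
        ((σ' ∘ₗ pr2) ∘ₗ (TensorProduct.assoc k H H H).toLinearMap)) = CT.convOne := by
    rw [keyI, conv_assoc,
      ← conv_assoc ((σ ∘ₗ map LinearMap.id (mul' k H)) ∘ₗ (TensorProduct.assoc k H H H).toLinearMap),
      ← conv_precomp _ _ hα, hdd', one_precomp hα, one_conv, ← conv_precomp _ _ hα, hcc',
      one_precomp hα]
  have keyII : conv (σ' ∘ₗ map (mul' k H) LinearMap.id)
        (σ' ∘ₗ (pr1 : (H ⊗[k] H) ⊗[k] H →ₗ[k] H ⊗[k] H))
      = conv ((σ' ∘ₗ map LinearMap.id (mul' k H)) ∘ₗ (TensorProduct.assoc k H H H).toLinearMap)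
          ((σ' ∘ₗ pr2) ∘ₗ (TensorProduct.assoc k H H H).toLinearMap) := by
    calc conv (σ' ∘ₗ map (mul' k H) LinearMap.id)
          (σ' ∘ₗ (pr1 : (H ⊗[k] H) ⊗[k] H →ₗ[k] H ⊗[k] H))
        = conv (conv (σ' ∘ₗ map (mul' k H) LinearMap.id) (σ' ∘ₗ pr1)) CT.convOne :=
          (conv_one _).symm
      _ = conv (conv (σ' ∘ₗ map (mul' k H) LinearMap.id) (σ' ∘ₗ pr1))
            (conv (conv (σ ∘ₗ pr1) (σ ∘ₗ map (mul' k H) LinearMap.id))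
              (conv ((σ' ∘ₗ map LinearMap.id (mul' k H)) ∘ₗ
                  (TensorProduct.assoc k H H H).toLinearMap)
                ((σ' ∘ₗ pr2) ∘ₗ (TensorProduct.assoc k H H H).toLinearMap))) := by rw [r3]
      _ = conv (conv (conv (σ' ∘ₗ map (mul' k H) LinearMap.id) (σ' ∘ₗ pr1))
            (conv (σ ∘ₗ pr1) (σ ∘ₗ map (mul' k H) LinearMap.id)))
            (conv ((σ' ∘ₗ map LinearMap.id (mul' k H)) ∘ₗ
                (TensorProduct.assoc k H H H).toLinearMap)
              ((σ' ∘ₗ pr2) ∘ₗ (TensorProduct.assoc k H H H).toLinearMap)) :=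
          (conv_assoc _ _ _).symm
      _ = conv CT.convOne _ := by rw [r2]
      _ = _ := one_conv _
  -- assemble
  rw [twmul_eq]
  have hφ : IsCoalgMap (map (conv (conv (emb σ) (mul' k H)) (emb σ' : H ⊗[k] H →ₗ[k] H))
      (LinearMap.id : H →ₗ[k] H)) := icm_map hTc icm_id
  have hψ : IsCoalgMap (map (LinearMap.id : H →ₗ[k] H)
      (conv (conv (emb σ) (mul' k H)) (emb σ' : H ⊗[k] H →ₗ[k] H))) := icm_map icm_id hTc
  have honeL : conv (emb (σ' ∘ₗ pr1) : (H ⊗[k] H) ⊗[k] H →ₗ[k] H) (emb (σ ∘ₗ pr1))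
      = CT.convOne := by
    rw [← emb_conv, ha'a, one_eq_counit, emb_counit]
  have honeR : conv (emb (σ' ∘ₗ pr2) : H ⊗[k] (H ⊗[k] H) →ₗ[k] H) (emb (σ ∘ₗ pr2))
      = CT.convOne := by
    rw [← emb_conv, hc'c, one_eq_counit, emb_counit]
  have bigL : conv (conv (emb σ) (mul' k H)) (emb σ' : H ⊗[k] H →ₗ[k] H) ∘ₗ
        map (conv (conv (emb σ) (mul' k H)) (emb σ' : H ⊗[k] H →ₗ[k] H)) LinearMap.id
      = conv (conv (conv (conv (emb (σ ∘ₗ pr1)) (emb (σ ∘ₗ map (mul' k H) LinearMap.id)))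
            (mul' k H ∘ₗ map (mul' k H) LinearMap.id))
            (emb (σ' ∘ₗ map (mul' k H) LinearMap.id)))
          (emb (σ' ∘ₗ pr1)) := by
    rw [conv_precomp _ _ hφ, conv_precomp _ _ hφ, emb_precomp, emb_precomp, s2, s3, s4,
      emb_conv, emb_conv, emb_conv, emb_conv]
    rw [conv_flatten _ _ _ _ _ _ honeL, conv_flatten _ _ _ _ _ _ honeL]
  have bigR : conv (conv (emb σ) (mul' k H)) (emb σ' : H ⊗[k] H →ₗ[k] H) ∘ₗ
        map LinearMap.id (conv (conv (emb σ) (mul' k H)) (emb σ' : H ⊗[k] H →ₗ[k] H))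
      = conv (conv (conv (conv (emb (σ ∘ₗ pr2)) (emb (σ ∘ₗ map LinearMap.id (mul' k H))))
            (mul' k H ∘ₗ map LinearMap.id (mul' k H)))
            (emb (σ' ∘ₗ map LinearMap.id (mul' k H))))
          (emb (σ' ∘ₗ pr2)) := by
    rw [conv_precomp _ _ hψ, conv_precomp _ _ hψ, emb_precomp, emb_precomp, s2', s3', s4',
      emb_conv, emb_conv, emb_conv, emb_conv]
    rw [conv_flatten _ _ _ _ _ _ honeR, conv_flatten _ _ _ _ _ _ honeR]
  rw [← comp_assoc, bigL, bigR]
  rw [conv_precomp _ _ hα, conv_precomp _ _ hα, conv_precomp _ _ hα, conv_precomp _ _ hα,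
    emb_precomp, emb_precomp, emb_precomp, emb_precomp]
  have hM3 : (mul' k H ∘ₗ map LinearMap.id (mul' k H)) ∘ₗ
      (TensorProduct.assoc k H H H).toLinearMap = mul' k H ∘ₗ map (mul' k H) LinearMap.id := by
    rw [comp_assoc]
    exact mulassoc3
  rw [hM3]
  have head : conv (emb (σ ∘ₗ pr1) : (H ⊗[k] H) ⊗[k] H →ₗ[k] H)
        (emb (σ ∘ₗ map (mul' k H) LinearMap.id))
      = conv (emb ((σ ∘ₗ pr2) ∘ₗ (TensorProduct.assoc k H H H).toLinearMap))
          (emb ((σ ∘ₗ map LinearMap.id (mul' k H)) ∘ₗ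
            (TensorProduct.assoc k H H H).toLinearMap)) := by
    rw [← emb_conv, ← emb_conv, keyI]
  have tail : ∀ X : (H ⊗[k] H) ⊗[k] H →ₗ[k] H,
      conv (conv X (emb (σ' ∘ₗ map (mul' k H) LinearMap.id))) (emb (σ' ∘ₗ pr1))
      = conv (conv X (emb ((σ' ∘ₗ map LinearMap.id (mul' k H)) ∘ₗ
            (TensorProduct.assoc k H H H).toLinearMap)))
          (emb ((σ' ∘ₗ pr2) ∘ₗ (TensorProduct.assoc k H H H).toLinearMap)) := by
    intro X
    rw [conv_assoc, ← emb_conv, keyII, emb_conv, ← conv_assoc]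
  rw [head, tail]

/-- The cocycle twist `H^σ` of a bialgebra is again a bialgebra: the twisted
product is associative with unit `1`, and the original comultiplication and counit are
algebra maps for it. -/
theorem stmt7 (k : Type*) [Field k] (H : Type*) [Ring H] [Bialgebra k H]
    (σ σ' : H ⊗[k] H →ₗ[k] k)
    (hcoc : IsCocycle k H σ)
    (hinv₁ : conv2 k H σ σ' = epsilon2 k H)
    (hinv₂ : conv2 k H σ' σ = epsilon2 k H) :
    -- associativity of `·_σ`
    twmul k H σ σ' ∘ₗ TensorProduct.map (twmul k H σ σ') LinearMap.id
      = twmul k H σ σ' ∘ₗ TensorProduct.map LinearMap.id (twmul k H σ σ')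
          ∘ₗ (TensorProduct.assoc k H H H).toLinearMap
    -- unitality of `·_σ`
    ∧ (∀ x : H, twmul k H σ σ' ((1 : H) ⊗ₜ[k] x) = x)
    ∧ (∀ x : H, twmul k H σ σ' (x ⊗ₜ[k] (1 : H)) = x)
    -- the comultiplication is an algebra map for `·_σ`
    ∧ (Coalgebra.comul (R := k) (A := H)) ∘ₗ twmul k H σ σ'
        = TensorProduct.map (twmul k H σ σ') (twmul k H σ σ') ∘ₗ comul2 k H
    -- the counit is an algebra map for `·_σ`
    ∧ (Coalgebra.counit (R := k) (A := H)) ∘ₗ twmul k H σ σ' = epsilon2 k H := by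
  refine ⟨part1 k H σ σ' hcoc hinv₁ hinv₂, ?_, ?_, part4 k H σ σ' hinv₂, part5 k H σ σ' hinv₁⟩
  · intro x
    have h := LinearMap.congr_fun (key_mkl k H σ σ' hcoc.1 hinv₂) x
    simpa [mkl] using h
  · intro x
    have h := LinearMap.congr_fun (key_mkr k H σ σ' hcoc.1 hinv₂) x
    simpa [mkr] using h

end Main
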